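/- In the setting of a product arrangement F = fg with f ∈ K[x_1,…,x_r] and g ∈ K[y_1,…,y_s] products of m_x resp. m_y distinct linear forms, the ideal 𝕀_F of (m_x+m_y−1)-fold products equals (f·𝕀_g, g·𝕀_f), and the Jacobian ideal satisfies J_F = (f·J_g, g·J_f). -/

import Mathlib

open MvPolynomial Finset

private lemma erase_inl_eq {α β : Type*} [Fintype α] [Fintype β] [DecidableEq α] [DecidableEq β]
    (k : α) : (univ : Finset (α ⊕ β)).erase (Sum.inl k) = (univ.erase k).disjSum univ := by
  ext x; cases x <;> simp

private lemma erase_inr_eq {α β : Type*} [Fintype α] [Fintype β] [DecidableEq α] [DecidableEq β]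
    (k : β) : (univ : Finset (α ⊕ β)).erase (Sum.inr k) = univ.disjSum (univ.erase k) := by
  ext x; cases x <;> simp

theorem stmt16 {K : Type*} [Field K] {r s mx my : ℕ}
    (a : Fin mx → Fin r → K) (b : Fin my → Fin s → K)
    (lx : Fin mx → MvPolynomial (Fin r ⊕ Fin s) K)
    (ly : Fin my → MvPolynomial (Fin r ⊕ Fin s) K)
    (hlx : ∀ j, lx j = ∑ i, C (a j i) * X (Sum.inl i))
    (hly : ∀ j, ly j = ∑ i, C (b j i) * X (Sum.inr i))
    (hinjx : Function.Injective lx) (hinjy : Function.Injective ly)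
    (f g : MvPolynomial (Fin r ⊕ Fin s) K)
    (hf : f = ∏ j, lx j) (hg : g = ∏ j, ly j)
    (If Ig IF Jf Jg JF : Ideal (MvPolynomial (Fin r ⊕ Fin s) K))
    (hIf : If = Ideal.span (Set.range fun k => ∏ j ∈ Finset.univ.erase k, lx j))
    (hIg : Ig = Ideal.span (Set.range fun k => ∏ j ∈ Finset.univ.erase k, ly j))
    (hIF : IF = Ideal.span (Set.range fun k : Fin mx ⊕ Fin my =>
      ∏ j ∈ Finset.univ.erase k, Sum.elim lx ly j))
    (hJf : Jf = Ideal.span (Set.range fun v => pderiv v f))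
    (hJg : Jg = Ideal.span (Set.range fun v => pderiv v g))
    (hJF : JF = Ideal.span (Set.range fun v => pderiv v (f * g))) :
    IF = Ideal.span {f} * Ig ⊔ Ideal.span {g} * If ∧
      JF = Ideal.span {f} * Jg ⊔ Ideal.span {g} * Jf := by
  have hdx : ∀ v : Fin s, pderiv (Sum.inr v) f = 0 := by
    intro v
    rw [hf]
    refine Finset.prod_induction _ (fun p => pderiv (Sum.inr v) p = 0) ?_ ?_ ?_
    · intro p q hp hq; simp [pderiv_mul, hp, hq]
    · simp
    · intro j _; simp [hlx, pderiv_X, Pi.single_apply]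
  have hdy : ∀ v : Fin r, pderiv (Sum.inl v) g = 0 := by
    intro v
    rw [hg]
    refine Finset.prod_induction _ (fun p => pderiv (Sum.inl v) p = 0) ?_ ?_ ?_
    · intro p q hp hq; simp [pderiv_mul, hp, hq]
    · simp
    · intro j _; simp [hly, pderiv_X, Pi.single_apply]
  have hPinl : ∀ k : Fin mx,
      (∏ j ∈ Finset.univ.erase (Sum.inl k : Fin mx ⊕ Fin my), Sum.elim lx ly j)
        = (∏ j ∈ Finset.univ.erase k, lx j) * g := by
    intro k
    rw [erase_inl_eq, Finset.prod_disjSum, hg]; simp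
  have hPinr : ∀ k : Fin my,
      (∏ j ∈ Finset.univ.erase (Sum.inr k : Fin mx ⊕ Fin my), Sum.elim lx ly j)
        = f * (∏ j ∈ Finset.univ.erase k, ly j) := by
    intro k
    rw [erase_inr_eq, Finset.prod_disjSum, hf]; simp
  have hJinl : ∀ i : Fin r, pderiv (Sum.inl i) (f * g) = g * pderiv (Sum.inl i) f := by
    intro i; rw [pderiv_mul, hdy, mul_zero, add_zero, mul_comm]
  have hJinr : ∀ i : Fin s, pderiv (Sum.inr i) (f * g) = f * pderiv (Sum.inr i) g := by
    intro i; rw [pderiv_mul, hdx, zero_mul, zero_add]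
  constructor
  · rw [hIF, hIf, hIg]
    apply le_antisymm
    · rw [Ideal.span_le]
      rintro _ ⟨k, rfl⟩
      dsimp only
      cases k with
      | inl k =>
          rw [hPinl k, mul_comm (∏ j ∈ Finset.univ.erase k, lx j) g]
          exact Ideal.mem_sup_right (Ideal.mul_mem_mul (Ideal.mem_span_singleton_self g)
            (Ideal.subset_span ⟨k, rfl⟩))
      | inr k =>
          rw [hPinr k]
          exact Ideal.mem_sup_left (Ideal.mul_mem_mul (Ideal.mem_span_singleton_self f)
            (Ideal.subset_span ⟨k, rfl⟩))
    · apply sup_le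
      · rw [Ideal.span_mul_span', Ideal.span_le]
        rintro _ ⟨x, hx, y, ⟨k, rfl⟩, rfl⟩
        rcases hx with rfl
        exact Ideal.subset_span ⟨Sum.inr k, by dsimp only; exact hPinr k⟩
      · rw [Ideal.span_mul_span', Ideal.span_le]
        rintro _ ⟨x, hx, y, ⟨k, rfl⟩, rfl⟩
        rcases hx with rfl
        refine Ideal.subset_span ⟨Sum.inl k, ?_⟩
        dsimp only
        rw [hPinl k, mul_comm (∏ j ∈ Finset.univ.erase k, lx j) x]
  · rw [hJF, hJf, hJg]
    apply le_antisymm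
    · rw [Ideal.span_le]
      rintro _ ⟨v, rfl⟩
      dsimp only
      cases v with
      | inl i =>
          rw [hJinl i]
          exact Ideal.mem_sup_right (Ideal.mul_mem_mul (Ideal.mem_span_singleton_self g)
            (Ideal.subset_span ⟨Sum.inl i, rfl⟩))
      | inr i =>
          rw [hJinr i]
          exact Ideal.mem_sup_left (Ideal.mul_mem_mul (Ideal.mem_span_singleton_self f)
            (Ideal.subset_span ⟨Sum.inr i, rfl⟩))
    · apply sup_le
      · rw [Ideal.span_mul_span', Ideal.span_le]
        rintro _ ⟨x, hx, y, ⟨v, rfl⟩, rfl⟩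
        rcases hx with rfl
        dsimp only
        cases v with
        | inl i => rw [hdy i, mul_zero]; exact Ideal.zero_mem _
        | inr i => exact Ideal.subset_span ⟨Sum.inr i, by dsimp only; exact hJinr i⟩
      · rw [Ideal.span_mul_span', Ideal.span_le]
        rintro _ ⟨x, hx, y, ⟨v, rfl⟩, rfl⟩
        rcases hx with rfl
        dsimp only
        cases v with
        | inr i => rw [hdx i, mul_zero]; exact Ideal.zero_mem _
        | inl i =>
            refine Ideal.subset_span ⟨Sum.inl i, ?_⟩
            dsimp only
            rw [hJinl i]
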